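/- arXiv:math-ph/9907014 — 2 statements merged into one kernel-verified Lean document; each statement's English description precedes it below -/
import Mathlib

section
/- Conversely, let n divide N with N = k·n, let b be a string of length n over {0, …, A−1} whose orbit under the cyclic shift of length-n strings has size exactly n, and let a be the string of length N obtained by concatenating k copies of b (a_i = b_{i mod n}). Then the orbit of a under the cyclic shift of length-N strings has size exactly n, and Σ(a) = k·Σ(b). -/
/-- The cyclic shift operator: `(shift a) i = a (i - 1 mod N)`. -/
def shift {A N : ℕ} (a : Fin N → Fin A) : Fin N → Fin A :=
  fun i => a ⟨((i : ℕ) + (N - 1)) % N, Nat.mod_lt _ i.pos⟩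

/-- The orbit of a string under iterated cyclic shifts. -/
def orbit {A N : ℕ} (a : Fin N → Fin A) : Set (Fin N → Fin A) :=
  {b | ∃ k : ℕ, shift^[k] a = b}

/-- The order of the cycle generated by `a`: the size of its shift orbit. -/
noncomputable def orbitSize {A N : ℕ} (a : Fin N → Fin A) : ℕ :=
  (orbit a).ncard

/-- The sum of the entries of a string. -/
def strSum {A N : ℕ} (a : Fin N → Fin A) : ℕ := ∑ i, (a i : ℕ)

/-- `|S(A,N,M)|`: the number of strings of length `N` over `{0,…,A-1}` with sum `M`. -/
noncomputable def Scard (A N M : ℕ) : ℕ :=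
  Set.ncard {a : Fin N → Fin A | strSum a = M}

/-- `M(A,N,M,n)`: the number of strings of length `N` over `{0,…,A-1}` with sum `M`
whose orbit has size exactly `n`. -/
noncomputable def Mcount (A N M n : ℕ) : ℕ :=
  Set.ncard {a : Fin N → Fin A | strSum a = M ∧ orbitSize a = n}

/-- `N(A,N,M,n)`: the number of cycles (shift orbits) of size exactly `n` among strings
of length `N` over `{0,…,A-1}` with sum `M`. -/
noncomputable def Ncount (A N M n : ℕ) : ℕ :=
  Set.ncard {o : Set (Fin N → Fin A) | ∃ a, strSum a = M ∧ orbitSize a = n ∧ o = orbit a}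

lemma shift_iter {A N : ℕ} (c : Fin N → Fin A) (m : ℕ) (i : Fin N) :
    (shift^[m] c) i = c ⟨((i : ℕ) + m * (N - 1)) % N, Nat.mod_lt _ i.pos⟩ := by
  induction m generalizing i with
  | zero =>
      simp only [Function.iterate_zero, id]
      congr 1
      exact Fin.ext (by simp [Nat.mod_eq_of_lt i.isLt])
  | succ m ih =>
      rw [Function.iterate_succ_apply']
      show (shift^[m] c) ⟨((i:ℕ) + (N - 1)) % N, _⟩ = _
      rw [ih]
      congr 1
      apply Fin.ext
      show (((i:ℕ) + (N - 1)) % N + m * (N - 1)) % N = ((i:ℕ) + (m+1) * (N - 1)) % N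
      rw [Nat.mod_add_mod]
      ring_nf

lemma shift_full {A n : ℕ} (c : Fin n → Fin A) : shift^[n] c = c := by
  funext i
  rw [shift_iter]
  congr 1
  apply Fin.ext
  show ((i:ℕ) + n * (n - 1)) % n = (i:ℕ)
  rw [Nat.add_mul_mod_self_left, Nat.mod_eq_of_lt i.isLt]

lemma shift_mod {A n : ℕ} (c : Fin n → Fin A) (m : ℕ) (hn : 0 < n) :
    shift^[m] c = shift^[m % n] c := by
  conv_lhs => rw [← Nat.mod_add_div m n, Function.iterate_add_apply,
    Function.iterate_mul, Function.iterate_fixed (shift_full c) (m / n)]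


/-- Conversely: if `n` divides `N = k·n ≥ 1`, `b` is a string of length `n` with orbit of
size exactly `n`, and `a` is the length-`N` concatenation of `k` copies of `b`
(`a_i = b_{i mod n}`), then the orbit of `a` has size exactly `n` and `Σ(a) = k·Σ(b)`. -/
theorem stmt_5 (A N n k : ℕ) (hN : 1 ≤ N) (hk : N = k * n)
    (b : Fin n → Fin A) (hb : orbitSize b = n)
    (a : Fin N → Fin A)
    (ha : ∀ (i : Fin N) (j : Fin n), (i : ℕ) % n = (j : ℕ) → a i = b j) :
    orbitSize a = n ∧ strSum a = k * strSum b := by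
  have hn : 0 < n := by
    rcases Nat.eq_zero_or_pos n with h | h
    · subst h; simp at hk; omega
    · exact h
  have hk0 : 0 < k := by
    rcases Nat.eq_zero_or_pos k with h | h
    · subst h; simp at hk; omega
    · exact h
  have hle : n ≤ N := by
    rw [hk]; exact Nat.le_mul_of_pos_left n hk0
  have hdvd : n ∣ N := ⟨k, by rw [hk, Nat.mul_comm]⟩
  -- congruence of N-1 and n-1 mod n
  have hmodeq : (n - 1) ≡ (N - 1) [MOD n] := by
    rw [Nat.modEq_iff_dvd' (by omega)]
    have h1 : N - 1 - (n - 1) = N - n := by omega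
    rw [h1]
    exact Nat.dvd_sub hdvd dvd_rfl
  -- key restriction identity
  have hr : ∀ (m : ℕ) (j : Fin n), (shift^[m] a) (Fin.castLE hle j) = (shift^[m] b) j := by
    intro m j
    rw [shift_iter, shift_iter]
    apply ha
    show (((j:ℕ) + m * (N - 1)) % N) % n = ((j:ℕ) + m * (n - 1)) % n
    rw [Nat.mod_mod_of_dvd _ hdvd]
    exact (((hmodeq.mul_left m).add_left (j:ℕ)).symm : _)
  -- a is n-periodic
  have hper : shift^[n] a = a := by
    funext i
    rw [shift_iter]
    have h1 := ha ⟨((i:ℕ) + n * (N - 1)) % N, Nat.mod_lt _ i.pos⟩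
      ⟨(i:ℕ) % n, Nat.mod_lt _ hn⟩ ?_
    · rw [h1]
      exact (ha i ⟨(i:ℕ) % n, Nat.mod_lt _ hn⟩ rfl).symm
    · show (((i:ℕ) + n * (N - 1)) % N) % n = (i:ℕ) % n
      rw [Nat.mod_mod_of_dvd _ hdvd, Nat.add_mul_mod_self_left]
  have hamod : ∀ m : ℕ, shift^[m] a = shift^[m % n] a := by
    intro m
    conv_lhs => rw [← Nat.mod_add_div m n, Function.iterate_add_apply,
      Function.iterate_mul, Function.iterate_fixed hper (m / n)]
  -- orbit b as finset image
  set f : ℕ → (Fin n → Fin A) := fun m => shift^[m] b with hf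
  have horbb : orbit b = ↑((Finset.range n).image f) := by
    ext c
    simp only [orbit, Set.mem_setOf_eq, Finset.coe_image, Set.mem_image,
      Finset.mem_coe, Finset.mem_range]
    constructor
    · rintro ⟨m, rfl⟩
      exact ⟨m % n, Nat.mod_lt _ hn, (shift_mod b m hn).symm⟩
    · rintro ⟨m, _, rfl⟩
      exact ⟨m, rfl⟩
  have hcard : ((Finset.range n).image f).card = n := by
    have := hb
    rw [orbitSize, horbb, Set.ncard_coe_finset] at this
    exact this
  have hinj : Set.InjOn f ↑(Finset.range n) :=
    Finset.injOn_of_card_image_eq (by rw [hcard, Finset.card_range])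
  have hbinj : ∀ m m' : ℕ, shift^[m] b = shift^[m'] b → m % n = m' % n := by
    intro m m' h
    rw [shift_mod b m hn, shift_mod b m' hn] at h
    exact hinj (by simp [Nat.mod_lt _ hn]) (by simp [Nat.mod_lt _ hn]) h
  -- the restriction map
  set r : (Fin N → Fin A) → (Fin n → Fin A) := fun c j => c (Fin.castLE hle j) with hrdef
  have hrm : ∀ m : ℕ, r (shift^[m] a) = shift^[m] b := fun m => funext (hr m)
  have himg : r '' orbit a = orbit b := by
    ext c
    constructor
    · rintro ⟨x, ⟨m, rfl⟩, rfl⟩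
      exact ⟨m, (hrm m).symm⟩
    · rintro ⟨m, rfl⟩
      exact ⟨shift^[m] a, ⟨m, rfl⟩, hrm m⟩
  have hrinj : Set.InjOn r (orbit a) := by
    rintro x ⟨m, rfl⟩ y ⟨m', rfl⟩ h
    rw [hrm, hrm] at h
    rw [hamod m, hamod m', hbinj m m' h]
  constructor
  · rw [orbitSize, ← Set.ncard_image_of_injOn hrinj, himg, ← orbitSize, hb]
  · -- sum
    have hab : ∀ i : Fin N, a i = b ⟨(i:ℕ) % n, Nat.mod_lt _ hn⟩ :=
      fun i => ha i _ rfl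
    let e : Fin k × Fin n ≃ Fin N := finProdFinEquiv.trans (finCongr hk.symm)
    have : strSum a = ∑ p : Fin k × Fin n, ((a (e p)) : ℕ) :=
      (Equiv.sum_comp e _).symm
    rw [this]
    have hep : ∀ p : Fin k × Fin n, a (e p) = b p.2 := by
      intro p
      rw [hab]
      congr 1
      apply Fin.ext
      show ((p.2 : ℕ) + n * (p.1 : ℕ)) % n = (p.2 : ℕ)
      rw [Nat.add_mul_mod_self_left, Nat.mod_eq_of_lt p.2.isLt]
    simp only [hep]
    rw [Fintype.sum_prod_type]
    simp [strSum, Finset.sum_const, Finset.card_univ]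
end

section
/- For natural numbers A ≥ 1, N ≥ 1 and M, one has |S(A, N, M)| = ∑_{n ∈ D(A,N,M)} M(A, N, M, n), i.e. the number of strings of length N over {0, …, A−1} with sum M equals the sum over all n dividing N with N | M·n of the number of such strings whose cyclic-shift orbit has size exactly n. -/
lemma shift_iter_apply {A N : ℕ} (a : Fin N → Fin A) (k : ℕ) (i : Fin N) :
    shift^[k] a i = a ⟨((i : ℕ) + k * (N - 1)) % N, Nat.mod_lt _ i.pos⟩ := by
  induction k generalizing i with
  | zero => simp [Nat.mod_eq_of_lt i.isLt]
  | succ k ih =>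
    rw [Function.iterate_succ_apply', shift, ih]
    congr 1
    apply Fin.ext
    show ((((i:ℕ) + (N-1)) % N) + k * (N-1)) % N = ((i:ℕ) + (k+1) * (N-1)) % N
    rw [Nat.mod_add_mod]
    congr 1
    ring

lemma shift_iter_N {A N : ℕ} (a : Fin N → Fin A) : shift^[N] a = a := by
  funext i
  rw [shift_iter_apply]
  congr 1
  apply Fin.ext
  show ((i:ℕ) + N * (N-1)) % N = i
  rw [Nat.add_mul_mod_self_left, Nat.mod_eq_of_lt i.isLt]

lemma sum_periodic (f : ℕ → ℕ) (d : ℕ) (hf : ∀ i, f (i + d) = f i) (c : ℕ) :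
    ∑ i ∈ Finset.range (c * d), f i = c * ∑ i ∈ Finset.range d, f i := by
  have hmul : ∀ m i, f (i + m * d) = f i := by
    intro m
    induction m with
    | zero => simp
    | succ m ih => intro i; rw [Nat.succ_mul, ← Nat.add_assoc, hf, ih]
  induction c with
  | zero => simp
  | succ c ih =>
    rw [Nat.succ_mul, Finset.sum_range_add, ih, Nat.succ_mul]
    congr 1
    apply Finset.sum_congr rfl
    intro i _
    rw [Nat.add_comm (c*d) i, hmul]

lemma orbit_key {A N : ℕ} (hN : 1 ≤ N) (a : Fin N → Fin A) :
    orbitSize a ∣ N ∧ N ∣ strSum a * orbitSize a := by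
  have hex : ∃ k, 0 < k ∧ shift^[k] a = a := ⟨N, hN, shift_iter_N a⟩
  set d := Nat.find hex with hd
  obtain ⟨hd1, hd2⟩ : 0 < d ∧ shift^[d] a = a := Nat.find_spec hex
  have hmin : ∀ k, 0 < k → k < d → shift^[k] a ≠ a := by
    intro k hk1 hk2 hk3
    exact (Nat.find_min hex hk2) ⟨hk1, hk3⟩
  have hmult : ∀ m, shift^[m * d] a = a := by
    intro m
    induction m with
    | zero => simp
    | succ m ih => rw [Nat.succ_mul, Function.iterate_add_apply, hd2, ih]
  -- d divides N
  have hdvd : d ∣ N := by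
    apply Nat.dvd_of_mod_eq_zero
    by_contra h
    have h1 : N % d < d := Nat.mod_lt _ hd1
    have h2 : shift^[N % d] a = a := by
      have : shift^[N % d + (N / d) * d] a = a := by
        rw [Nat.mod_add_div' N d]; exact shift_iter_N a
      rwa [Function.iterate_add_apply, hmult] at this
    exact hmin _ (Nat.pos_of_ne_zero h) h1 h2
  -- orbitSize a = d
  have hmod : ∀ k, shift^[k] a = shift^[k % d] a := by
    intro k
    conv_lhs => rw [← Nat.mod_add_div' k d]
    rw [Function.iterate_add_apply, hmult]
  have hinj : ∀ i j, i < j → j < d → shift^[i] a ≠ shift^[j] a := by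
    intro i j hij hjd heq
    have : shift^[(d - j) + i] a = a := by
      rw [Function.iterate_add_apply, heq, ← Function.iterate_add_apply,
        Nat.sub_add_cancel hjd.le]
      exact hd2
    exact hmin _ (by omega) (by omega) this
  have hsize : orbitSize a = d := by
    have horb : orbit a = ↑((Finset.range d).image fun k => shift^[k] a) := by
      ext b
      simp only [orbit, Set.mem_setOf_eq, Finset.coe_image, Finset.coe_range,
        Set.mem_image, Set.mem_Iio]
      constructor
      · rintro ⟨k, rfl⟩
        exact ⟨k % d, Nat.mod_lt _ hd1, (hmod k).symm⟩
      · rintro ⟨k, _, rfl⟩; exact ⟨k, rfl⟩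
    rw [orbitSize, horb, Set.ncard_coe_finset]
    rw [Finset.card_image_of_injOn, Finset.card_range]
    intro i hi j hj heq
    simp only [Finset.coe_range, Set.mem_Iio] at hi hj
    rcases lt_trichotomy i j with h | h | h
    · exact absurd heq (hinj i j h hj)
    · exact h
    · exact absurd heq.symm (hinj j i h hi)
  refine ⟨hsize ▸ hdvd, ?_⟩
  -- periodicity of entries
  set f : ℕ → ℕ := fun i => (a ⟨i % N, Nat.mod_lt _ hN⟩ : ℕ) with hf
  have hper : ∀ j, f (j + d) = f j := by
    intro j
    have h1 := congrFun hd2 ⟨(j + d) % N, Nat.mod_lt _ hN⟩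
    rw [shift_iter_apply] at h1
    have hdn : d * (N - 1) + d = d * N := by
      rw [← Nat.mul_succ]; congr 1; omega
    have h2 : ((j + d) % N + d * (N - 1)) % N = j % N := by
      rw [Nat.mod_add_mod]
      have h3 : j + d + d * (N - 1) = j + d * N := by omega
      rw [h3, Nat.add_mul_mod_self_right]
    simp only [hf]
    rw [← h1]
    congr 1
    exact congrArg a (Fin.ext h2)
  -- strSum in terms of f
  have hsum : strSum a = ∑ i ∈ Finset.range N, f i := by
    rw [strSum, ← Fin.sum_univ_eq_sum_range]
    apply Finset.sum_congr rfl
    intro i _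
    simp only [hf]
    congr 1
    exact congrArg a (Fin.ext (Nat.mod_eq_of_lt i.isLt).symm)
  obtain ⟨c, hc⟩ := hdvd
  have hc' : N = c * d := by rw [hc]; ring
  have : strSum a = c * ∑ i ∈ Finset.range d, f i := by
    rw [hsum, hc', sum_periodic f d hper c]
  rw [hsize, this, hc']
  exact ⟨∑ i ∈ Finset.range d, f i, by ring⟩

/-- `|S(A,N,M)| = ∑_{n ∈ D(A,N,M)} M(A,N,M,n)`: the number of strings of length `N ≥ 1`
over `{0,…,A-1}` (`A ≥ 1`) with sum `M` equals the sum, over all `n` with `n ∣ N` and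
`N ∣ M·n`, of the number of such strings whose orbit has size exactly `n`. -/
theorem stmt_6 (A N M : ℕ) (hA : 1 ≤ A) (hN : 1 ≤ N) :
    Scard A N M =
      ∑ n ∈ N.divisors.filter (fun n => N ∣ M * n), Mcount A N M n := by
  classical
  set t := N.divisors.filter (fun n => N ∣ M * n) with ht
  set s : Finset (Fin N → Fin A) := Finset.univ.filter (fun a => strSum a = M) with hs
  have hS : Scard A N M = s.card := by
    rw [Scard, ← Set.ncard_coe_finset]
    congr 1
    ext a
    simp [hs]
  have hMc : ∀ n, Mcount A N M n = (s.filter (fun a => orbitSize a = n)).card := by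
    intro n
    rw [Mcount, ← Set.ncard_coe_finset]
    congr 1
    ext a
    simp [hs, Finset.filter_filter]
  have hmem : ∀ a ∈ s, orbitSize a ∈ t := by
    intro a ha
    rw [hs, Finset.mem_filter] at ha
    obtain ⟨hdvd, hdvd2⟩ := orbit_key hN a
    rw [ht, Finset.mem_filter, Nat.mem_divisors]
    exact ⟨⟨hdvd, by omega⟩, ha.2 ▸ hdvd2⟩
  rw [hS, Finset.card_eq_sum_card_fiberwise hmem]
  exact Finset.sum_congr rfl fun n _ => (hMc n).symm
end
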